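/- Every set B ⊆ ω with B ⊆* {m·2^n : m ∈ ω} for all n ∈ ω is neither syndetic nor thick. Hence the semifilter of sets that are syndetic or thick contains the chain ⟨{m·2^n : m ∈ ω} : n ∈ ω⟩ but no lower bound for it. -/

import Mathlib

def AlmostSub (A B : Set ℕ) : Prop := (A \ B).Finite

/-- `A` is syndetic: some `k` is such that every interval of length `k` meets `A`. -/
def Syndetic (A : Set ℕ) : Prop := ∃ k : ℕ, ∀ m : ℕ, ∃ i, m ≤ i ∧ i < m + k ∧ i ∈ A

/-- `A` is thick: it contains arbitrarily long intervals. -/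
def Thick (A : Set ℕ) : Prop := ∀ n : ℕ, ∃ a : ℕ, ∀ i, a ≤ i → i < a + n → i ∈ A

/-- `A n = {m·2^n : m ∈ ω}`. -/
def Apow (n : ℕ) : Set ℕ := {x | ∃ m : ℕ, x = m * 2 ^ n}

lemma almostSub_bound {A B : Set ℕ} (h : AlmostSub A B) :
    ∃ N : ℕ, ∀ x ∈ A, N ≤ x → x ∈ B := by
  obtain ⟨N, hN⟩ := (h.bddAbove)
  refine ⟨N + 1, fun x hx hNx => ?_⟩
  by_contra hxB
  have := hN (show x ∈ A \ B from ⟨hx, hxB⟩)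
  omega

lemma not_syndetic_of_chain (B : Set ℕ) (h : ∀ n : ℕ, AlmostSub B (Apow n)) :
    ¬ Syndetic B := by
  rintro ⟨k, hk⟩
  obtain ⟨N, hN⟩ := almostSub_bound (h k)
  have hpow : k < 2 ^ k := Nat.lt_two_pow_self (n := k)
  obtain ⟨i, hi1, hi2, hiB⟩ := hk ((N + 1) * 2 ^ k + 1)
  have hiA : i ∈ Apow k := hN i hiB (by nlinarith [Nat.one_le_two_pow (n := k)])
  obtain ⟨q, rfl⟩ := hiA
  have h1 : N + 1 < q := by
    by_contra hq
    have : q * 2 ^ k ≤ (N + 1) * 2 ^ k := Nat.mul_le_mul_right _ (by omega)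
    omega
  have h2 : (N + 2) * 2 ^ k ≤ q * 2 ^ k := Nat.mul_le_mul_right _ (by omega)
  have he : (N + 2) * 2 ^ k = (N + 1) * 2 ^ k + 2 ^ k := by ring
  omega

lemma not_thick_of_chain (B : Set ℕ) (h : ∀ n : ℕ, AlmostSub B (Apow n)) :
    ¬ Thick B := by
  intro ht
  obtain ⟨N, hN⟩ := almostSub_bound (h 1)
  obtain ⟨a, ha⟩ := ht (N + 3)
  set b := max a N
  have hb1 : b ∈ B := ha b (le_max_left _ _) (by omega)
  have hb2 : b + 1 ∈ B := ha (b + 1) (by omega) (by omega)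
  obtain ⟨m1, hm1⟩ := hN b hb1 (by omega)
  obtain ⟨m2, hm2⟩ := hN (b + 1) hb2 (by omega)
  simp [Apow] at hm1 hm2
  omega

lemma apow_syndetic (n : ℕ) : Syndetic (Apow n) := by
  refine ⟨2 ^ n, fun m => ?_⟩
  by_cases hd : 2 ^ n ∣ m
  · exact ⟨m, le_rfl, by have := Nat.one_le_two_pow (n := n); omega,
      ⟨m / 2 ^ n, (Nat.div_mul_cancel hd).symm⟩⟩
  · refine ⟨(m / 2 ^ n + 1) * 2 ^ n, ?_, ?_, ⟨_, rfl⟩⟩ <;>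
    · have h1 := Nat.div_add_mod m (2 ^ n)
      have h2 : m % 2 ^ n < 2 ^ n := Nat.mod_lt _ (pow_pos (by norm_num) _)
      have h3 : m % 2 ^ n ≠ 0 := fun h => hd (Nat.dvd_of_mod_eq_zero h)
      have : (m / 2 ^ n + 1) * 2 ^ n = m / 2 ^ n * 2 ^ n + 2 ^ n := by ring
      have h4 : 2 ^ n * (m / 2 ^ n) = m / 2 ^ n * 2 ^ n := Nat.mul_comm _ _
      omega

/-- Every `B` with `B ⊆* {m·2^n : m ∈ ω}` for all `n` is neither syndetic nor thick;
hence the semifilter of sets that are syndetic or thick contains the chain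
`⟨{m·2^n : m ∈ ω} : n ∈ ω⟩` but no lower bound for it. -/
theorem syndetic_or_thick_no_bound :
    (∀ B : Set ℕ, (∀ n : ℕ, AlmostSub B (Apow n)) → ¬ Syndetic B ∧ ¬ Thick B) ∧
    (∀ n : ℕ, Apow n ∈ {A : Set ℕ | Syndetic A ∨ Thick A}) ∧
    ¬ ∃ L ∈ {A : Set ℕ | Syndetic A ∨ Thick A}, ∀ n : ℕ, AlmostSub L (Apow n) := by
  refine ⟨fun B hB => ⟨not_syndetic_of_chain B hB, not_thick_of_chain B hB⟩,
    fun n => Or.inl (apow_syndetic n), ?_⟩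
  rintro ⟨L, hL, hchain⟩
  rcases hL with hs | ht
  · exact not_syndetic_of_chain L hchain hs
  · exact not_thick_of_chain L hchain ht
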